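/- Let U, Ũ ⊆ ℂ be connected open sets, let φ : Ũ → U be a conformal map (holomorphic bijection), let ξ > 0, and let h : U → ℝ be continuous. Define h̃ : Ũ → ℝ by h̃ = h∘φ + (1/ξ) log|φ′|. Then the weighted length metrics satisfy D_h(φ(z), φ(w)) = D_{h̃}(z, w) for all z, w ∈ Ũ, where D_h is defined on U using weight e^{ξ h} and D_{h̃} is defined on Ũ using weight e^{ξ h̃}. -/

import Mathlib

open MeasureTheory

/-- `P : [a,b] → ℂ` is a piecewise continuously differentiable path: it is continuous on
`[a,b]` and there is a partition `a = s 0 ≤ s 1 ≤ ⋯ ≤ s n = b` such that `P` is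
continuously differentiable on each piece `[s i, s (i+1)]`. -/
def IsPiecewiseC1Path (P : ℝ → ℂ) (a b : ℝ) : Prop :=
  ContinuousOn P (Set.Icc a b) ∧
  ∃ (n : ℕ) (s : Fin (n + 1) → ℝ), s 0 = a ∧ s (Fin.last n) = b ∧ Monotone s ∧
    ∀ i : Fin n, ContDiffOn ℝ 1 P (Set.Icc (s i.castSucc) (s i.succ))

/-- The weighted length `∫_a^b e^{ξ h(P(t))} |P′(t)| dt` of a path `P : [a,b] → ℂ`,
with weight exponent `ξ` and field `h`. -/
noncomputable def weightedLength (ξ : ℝ) (h : ℂ → ℝ) (P : ℝ → ℂ) (a b : ℝ) : ℝ :=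
  ∫ t in a..b, Real.exp (ξ * h (P t)) * ‖deriv P t‖

/-- The weighted length metric `D_h(z,w)`: the infimum of the weighted lengths of all
piecewise continuously differentiable paths in `U` from `z` to `w`. -/
noncomputable def weightedDist (ξ : ℝ) (h : ℂ → ℝ) (U : Set ℂ) (z w : ℂ) : ℝ :=
  sInf {L : ℝ | ∃ (a b : ℝ) (P : ℝ → ℂ), a ≤ b ∧ P a = z ∧ P b = w ∧
    (∀ t ∈ Set.Icc a b, P t ∈ U) ∧ IsPiecewiseC1Path P a b ∧ L = weightedLength ξ h P a b}

lemma mem_piece {n : ℕ} {s : Fin (n + 1) → ℝ} (hs : Monotone s) (hn : n ≠ 0) {t : ℝ}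
    (ht : t ∈ Set.Icc (s 0) (s (Fin.last n))) :
    ∃ i : Fin n, t ∈ Set.Icc (s i.castSucc) (s i.succ) := by
  classical
  set F : Finset (Fin (n + 1)) := Finset.univ.filter fun j => s j ≤ t with hF
  have h0F : (0 : Fin (n + 1)) ∈ F := by simp [hF, ht.1]
  set i₀ := F.max' ⟨0, h0F⟩ with hi₀def
  have hi₀ : s i₀ ≤ t := (Finset.mem_filter.mp (F.max'_mem ⟨0, h0F⟩)).2
  by_cases hlast : i₀ = Fin.last n
  · have hteq : t = s (Fin.last n) := le_antisymm ht.2 (hlast ▸ hi₀)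
    obtain ⟨m, rfl⟩ : ∃ m, n = m + 1 := ⟨n - 1, by omega⟩
    refine ⟨Fin.last m, ?_, ?_⟩
    · rw [hteq]; exact hs (by simp [Fin.le_def])
    · rw [hteq]; exact le_of_eq (by congr 1)
  · have hi₀lt : (i₀ : ℕ) < n := by
      have := Fin.lt_last_iff_ne_last.mpr hlast
      simpa [Fin.lt_def] using this
    refine ⟨⟨i₀, hi₀lt⟩, ?_, ?_⟩
    · have : (⟨(i₀ : ℕ), hi₀lt⟩ : Fin n).castSucc = i₀ := by ext; simp
      rw [this]; exact hi₀
    · by_contra hcon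
      push_neg at hcon
      have hmem : (⟨(i₀ : ℕ), hi₀lt⟩ : Fin n).succ ∈ F := by
        simp only [hF, Finset.mem_filter, Finset.mem_univ, true_and]
        exact le_of_lt hcon
      have := F.le_max' _ hmem
      rw [← hi₀def] at this
      have : ((⟨(i₀ : ℕ), hi₀lt⟩ : Fin n).succ : ℕ) ≤ (i₀ : ℕ) := this
      simp at this

lemma piece_subset {n : ℕ} {s : Fin (n + 1) → ℝ} (hs : Monotone s) (i : Fin n) :
    Set.Icc (s i.castSucc) (s i.succ) ⊆ Set.Icc (s 0) (s (Fin.last n)) :=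
  Set.Icc_subset_Icc (hs (Fin.zero_le _)) (hs (Fin.le_last _))

lemma comp_piecewise {W : Set ℂ} (hW : IsOpen W) {χ : ℂ → ℂ} (hχ : DifferentiableOn ℂ χ W)
    {P : ℝ → ℂ} {a b : ℝ} (hP : IsPiecewiseC1Path P a b)
    (hmem : ∀ t ∈ Set.Icc a b, P t ∈ W) :
    IsPiecewiseC1Path (χ ∘ P) a b := by
  obtain ⟨hPc, n, s, hs0, hsl, hmono, hsd⟩ := hP
  have hχC : ContDiffOn ℝ 1 χ W := by
    have h1 : AnalyticOnNhd ℂ χ W := hχ.analyticOnNhd hW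
    have h2 : ContDiffOn ℂ 1 χ W := h1.contDiffOn (by exact hW.uniqueDiffOn)
    exact h2.restrict_scalars ℝ
  refine ⟨hχC.continuousOn.comp hPc fun t ht => hmem t ht, n, s, hs0, hsl, hmono, fun i => ?_⟩
  refine hχC.comp (hsd i) fun t ht => hmem t ?_
  have := piece_subset hmono i ht
  rwa [hs0, hsl] at this

lemma comp_length {W : Set ℂ} (hW : IsOpen W) {χ : ℂ → ℂ} (hχ : DifferentiableOn ℂ χ W)
    {ξ : ℝ} {g₁ g₂ : ℂ → ℝ}
    (hgg : ∀ w ∈ W, Real.exp (ξ * g₁ (χ w)) * ‖deriv χ w‖ = Real.exp (ξ * g₂ w))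
    {P : ℝ → ℂ} {a b : ℝ} (hab : a ≤ b) (hP : IsPiecewiseC1Path P a b)
    (hmem : ∀ t ∈ Set.Icc a b, P t ∈ W) :
    weightedLength ξ g₁ (χ ∘ P) a b = weightedLength ξ g₂ P a b := by
  obtain ⟨hPc, n, s, hs0, hsl, hmono, hsd⟩ := hP
  unfold weightedLength
  apply intervalIntegral.integral_congr_ae
  have hfin : (MeasureTheory.volume (Set.range s)) = 0 :=
    (Set.finite_range s).measure_zero _
  have hae : ∀ᵐ t : ℝ, t ∉ Set.range s := by
    rw [← MeasureTheory.compl_mem_ae_iff] at hfin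
    exact hfin
  filter_upwards [hae] with t hts ht
  rw [Set.uIoc_of_le hab] at ht
  have htIcc : t ∈ Set.Icc a b := Set.Ioc_subset_Icc_self ht
  have hn : n ≠ 0 := by
    rintro rfl
    have : a = b := by rw [← hs0, ← hsl]; rfl
    rw [this] at ht; exact absurd ht.1 (not_lt.mpr ht.2)
  obtain ⟨i, hi⟩ := mem_piece hmono hn (by rwa [hs0, hsl])
  have htIoo : t ∈ Set.Ioo (s i.castSucc) (s i.succ) := by
    refine ⟨lt_of_le_of_ne hi.1 ?_, lt_of_le_of_ne hi.2 ?_⟩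
    · exact fun h => hts ⟨_, h⟩
    · exact fun h => hts ⟨_, h.symm⟩
  have hPt : ContDiffAt ℝ 1 P t :=
    (hsd i).contDiffAt (Filter.mem_of_superset (isOpen_Ioo.mem_nhds htIoo)
      Set.Ioo_subset_Icc_self)
  have hPd : DifferentiableAt ℝ P t := hPt.differentiableAt one_ne_zero
  have hPw : P t ∈ W := hmem t htIcc
  have hχd : DifferentiableAt ℂ χ (P t) := hχ.differentiableAt (hW.mem_nhds hPw)
  have hcomp : HasDerivAt (χ ∘ P) (deriv P t • deriv χ (P t)) t :=
    hχd.hasDerivAt.scomp t hPd.hasDerivAt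
  have hderiv : deriv (χ ∘ P) t = deriv P t * deriv χ (P t) := hcomp.deriv
  show Real.exp (ξ * g₁ ((χ ∘ P) t)) * ‖deriv (χ ∘ P) t‖ = _
  rw [hderiv, norm_mul, Function.comp_apply]
  calc Real.exp (ξ * g₁ (χ (P t))) * (‖deriv P t‖ * ‖deriv χ (P t)‖)
      = (Real.exp (ξ * g₁ (χ (P t))) * ‖deriv χ (P t)‖) * ‖deriv P t‖ := by ring
    _ = Real.exp (ξ * g₂ (P t)) * ‖deriv P t‖ := by rw [hgg (P t) hPw]

open Complex Filter in
open scoped Topology in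
lemma deriv_ne_zero_of_injOn {V : Set ℂ} (hV : IsOpen V) {φ : ℂ → ℂ}
    (hφ : DifferentiableOn ℂ φ V) (hinj : Set.InjOn φ V) :
    ∀ z ∈ V, deriv φ z ≠ 0 := by
  intro z₀ hz₀ hd0
  have hφa : AnalyticAt ℂ φ z₀ := hφ.analyticAt (hV.mem_nhds hz₀)
  have hg : AnalyticAt ℂ (fun z => φ z - φ z₀) z₀ := hφa.sub analyticAt_const
  have hVmem : ∀ᶠ z in 𝓝 z₀, z ∈ V := hV.mem_nhds hz₀
  -- order is finite
  have hord : analyticOrderAt (fun z => φ z - φ z₀) z₀ ≠ ⊤ := by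
    intro htop
    rw [analyticOrderAt_eq_top] at htop
    have h1 : ∀ᶠ z in 𝓝[≠] z₀, φ z - φ z₀ = 0 ∧ z ∈ V :=
      (htop.and hVmem).filter_mono nhdsWithin_le_nhds
    obtain ⟨z, ⟨hgz, hzV⟩, hne⟩ := (h1.and self_mem_nhdsWithin).exists
    exact hne (hinj hzV hz₀ (by linear_combination (norm := module) hgz))
  obtain ⟨n, hn⟩ := WithTop.ne_top_iff_exists.mp hord
  obtain ⟨u, hu, hu0, hgu⟩ := (hg.analyticOrderAt_eq_natCast (n := n)).mp (by exact_mod_cast hn.symm)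
  -- n ≥ 2
  have hn0 : n ≠ 0 := by
    rintro rfl
    have := hgu.self_of_nhds
    simp only [sub_self, pow_zero, one_smul] at this
    exact hu0 this.symm
  have hn1 : n ≠ 1 := by
    rintro rfl
    have h1 : HasDerivAt (fun z => (z - z₀) ^ 1 • u z) (u z₀) z₀ := by
      have h2 : HasDerivAt (fun z : ℂ => z - z₀) 1 z₀ := (hasDerivAt_id z₀).sub_const z₀
      have h3 : HasDerivAt u (deriv u z₀) z₀ := hu.differentiableAt.hasDerivAt
      have := (h2.mul h3)
      simp only [pow_one, smul_eq_mul]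
      exact this.congr_deriv (by simp)
    have h4 : HasDerivAt (fun z => φ z - φ z₀) (u z₀) z₀ := h1.congr_of_eventuallyEq hgu
    have h5 : deriv (fun z => φ z - φ z₀) z₀ = u z₀ := h4.deriv
    rw [deriv_sub_const, hd0] at h5
    exact hu0 h5.symm
  have hn2 : 2 ≤ n := by omega
  -- n-th root of u
  set u₀ := u z₀ with hu₀
  set c := Complex.exp (Complex.log u₀ / n) with hc
  have hc0 : c ≠ 0 := Complex.exp_ne_zero _
  have hcn : c ^ n = u₀ := by
    rw [hc, ← Complex.exp_nat_mul]
    rw [mul_div_cancel₀ _ (by exact_mod_cast hn0 : (n : ℂ) ≠ 0)]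
    exact Complex.exp_log hu0
  set v : ℂ → ℂ := fun z => c * Complex.exp ((n : ℂ)⁻¹ * Complex.log (u z / u₀)) with hv
  have hva : AnalyticAt ℂ v z₀ := by
    apply analyticAt_const.mul
    apply AnalyticAt.cexp
    apply analyticAt_const.mul
    apply AnalyticAt.clog (hu.div analyticAt_const hu0)
    simp [hu₀, div_self (show u z₀ ≠ 0 from hu0), Complex.one_mem_slitPlane]
  have hv0 : v z₀ = c := by
    simp [hv, hu₀, div_self (show u z₀ ≠ 0 from hu0), Complex.log_one]
  have hvu : ∀ᶠ z in 𝓝 z₀, v z ^ n = u z := by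
    filter_upwards [hu.continuousAt.eventually_ne hu0] with z hz
    show (c * Complex.exp ((n : ℂ)⁻¹ * Complex.log (u z / u₀))) ^ n = u z
    rw [mul_pow, hcn, ← Complex.exp_nat_mul, ← mul_assoc,
      mul_inv_cancel₀ (by exact_mod_cast hn0 : (n : ℂ) ≠ 0), one_mul,
      Complex.exp_log (div_ne_zero hz hu0)]
    field_simp
  -- G = (z - z₀) * v z
  set G : ℂ → ℂ := fun z => (z - z₀) * v z with hG
  have hGs : HasStrictDerivAt G c z₀ := by
    have h2 : HasStrictDerivAt (fun z : ℂ => z - z₀) 1 z₀ := (hasStrictDerivAt_id z₀).sub_const z₀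
    have h3 : HasStrictDerivAt v (deriv v z₀) z₀ :=
      (hva.contDiffAt (n := 1)).hasStrictDerivAt one_ne_zero
    have := h2.mul h3
    exact this.congr_deriv (by simp [hv0])
  have hG0 : G z₀ = 0 := by simp [hG]
  have hmap : Filter.map G (𝓝 z₀) = 𝓝 0 := by
    have := hGs.map_nhds_eq hc0
    rwa [hG0] at this
  -- good set
  have hEv : ∀ᶠ z in 𝓝 z₀, z ∈ V ∧ (φ z - φ z₀ = (z - z₀) ^ n • u z) ∧ v z ^ n = u z :=
    hVmem.and (hgu.and hvu)
  obtain ⟨E, hEsub, hEnhds⟩ : ∃ E ∈ 𝓝 z₀,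
      ∀ z ∈ E, z ∈ V ∧ (φ z - φ z₀ = (z - z₀) ^ n • u z) ∧ v z ^ n = u z :=
    ⟨_, hEv, fun z hz => hz⟩
  have hGE : G '' E ∈ 𝓝 (0 : ℂ) := by
    rw [← hmap]
    exact Filter.mem_map.mpr (Filter.mem_of_superset hEsub (Set.subset_preimage_image G E))
  obtain ⟨ε, hε, hball⟩ := Metric.mem_nhds_iff.mp hGE
  -- root of unity
  set ζ := Complex.exp (2 * Real.pi * Complex.I / n) with hζ
  have hprim : IsPrimitiveRoot ζ n := Complex.isPrimitiveRoot_exp n hn0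
  have hζn : ζ ^ n = 1 := hprim.pow_eq_one
  have hζ1 : ζ ≠ 1 := hprim.ne_one (by omega)
  have hζnorm : ‖ζ‖ = 1 := by
    have h1 : ‖ζ‖ ^ n = 1 := by rw [← norm_pow, hζn, norm_one]
    rcases lt_trichotomy ‖ζ‖ 1 with h | h | h
    · nlinarith [pow_lt_one₀ (norm_nonneg ζ) h hn0]
    · exact h
    · nlinarith [one_lt_pow₀ h hn0]
  set w : ℂ := ((ε / 2 : ℝ) : ℂ) with hw
  have hw0 : w ≠ 0 := by
    simp only [hw, ne_eq, Complex.ofReal_eq_zero]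
    positivity
  have hwnorm : ‖w‖ = ε / 2 := by
    rw [hw, Complex.norm_real, Real.norm_eq_abs, abs_of_pos (by positivity)]
  have hwball : w ∈ Metric.ball (0 : ℂ) ε := by
    rw [Metric.mem_ball, dist_zero_right, hwnorm]; linarith
  have hζwball : ζ * w ∈ Metric.ball (0 : ℂ) ε := by
    rw [Metric.mem_ball, dist_zero_right, norm_mul, hζnorm, one_mul, hwnorm]; linarith
  obtain ⟨z₁, hz₁E, hz₁⟩ := hball hwball
  obtain ⟨z₂, hz₂E, hz₂⟩ := hball hζwball
  obtain ⟨hz₁V, hgu₁, hvu₁⟩ := hEnhds _ hz₁E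
  obtain ⟨hz₂V, hgu₂, hvu₂⟩ := hEnhds _ hz₂E
  have hφ₁ : φ z₁ = φ z₀ + w ^ n := by
    have h2 : φ z₁ - φ z₀ = G z₁ ^ n := by
      rw [hgu₁, smul_eq_mul]
      show _ = ((z₁ - z₀) * v z₁) ^ n
      rw [mul_pow, hvu₁]
    rw [hz₁] at h2
    linear_combination h2
  have hφ₂ : φ z₂ = φ z₀ + w ^ n := by
    have h2 : φ z₂ - φ z₀ = G z₂ ^ n := by
      rw [hgu₂, smul_eq_mul]
      show _ = ((z₂ - z₀) * v z₂) ^ n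
      rw [mul_pow, hvu₂]
    rw [hz₂, mul_pow, hζn, one_mul] at h2
    linear_combination h2
  have heq : z₁ = z₂ := hinj hz₁V hz₂V (by rw [hφ₁, hφ₂])
  rw [heq, hz₂] at hz₁
  exact hζ1 (mul_right_cancel₀ hw0 (by rw [one_mul, hz₁]))

set_option maxHeartbeats 1000000 in
/-- Coordinate change for the weighted length metric: if `φ : Ũ → U` is a holomorphic
bijection between connected open subsets of `ℂ`, `ξ > 0`, `h : U → ℝ` is continuous and
`h̃ = h ∘ φ + (1/ξ) log |φ′|`, then `D_h(φ(z), φ(w)) = D_h̃(z, w)` for all `z, w ∈ Ũ`. -/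
theorem lqg_metric_coordinate_change
    {U V : Set ℂ} (hU : IsOpen U) (hUconn : IsConnected U)
    (hV : IsOpen V) (hVconn : IsConnected V)
    {φ : ℂ → ℂ} (hφ : DifferentiableOn ℂ φ V) (hφbij : Set.BijOn φ V U)
    {ξ : ℝ} (hξ : 0 < ξ) {h : ℂ → ℝ} (hh : ContinuousOn h U) :
    ∀ z ∈ V, ∀ w ∈ V,
      weightedDist ξ h U (φ z) (φ w)
        = weightedDist ξ (fun x => h (φ x) + (1 / ξ) * Real.log ‖deriv φ x‖) V z w := by
  intro z hz w hw
  have hinj := hφbij.injOn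
  have hder : ∀ x ∈ V, deriv φ x ≠ 0 := deriv_ne_zero_of_injOn hV hφ hinj
  set ψ := Function.invFunOn φ V with hψdef
  have hleft : ∀ x ∈ V, ψ (φ x) = x := fun x hx => hinj.leftInvOn_invFunOn hx
  have hψV : ∀ y ∈ U, ψ y ∈ V ∧ φ (ψ y) = y := by
    intro y hy
    obtain ⟨x, hxV, hxy⟩ := hφbij.surjOn hy
    rw [← hxy, hleft x hxV]
    exact ⟨hxV, rfl⟩
  have hstrict : ∀ x ∈ V, HasStrictDerivAt φ (deriv φ x) x := fun x hx =>
    ((hφ.analyticAt (hV.mem_nhds hx)).contDiffAt (n := 1)).hasStrictDerivAt one_ne_zero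
  have hψd : ∀ y ∈ U, HasStrictDerivAt ψ (deriv φ (ψ y))⁻¹ y := by
    intro y hy
    obtain ⟨hyV, hyφ⟩ := hψV y hy
    have := (hstrict _ hyV).to_local_left_inverse (hder _ hyV) (g := ψ)
      (by filter_upwards [hV.mem_nhds hyV] with x hx using hleft x hx)
    rwa [hyφ] at this
  have hψder : ∀ y ∈ U, deriv ψ y = (deriv φ (ψ y))⁻¹ := fun y hy =>
    (hψd y hy).hasDerivAt.deriv
  have hψdiff : DifferentiableOn ℂ ψ U := fun y hy =>
    ((hψd y hy).hasDerivAt.differentiableAt).differentiableWithinAt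
  have hid1 : ∀ x ∈ V, Real.exp (ξ * h (φ x)) * ‖deriv φ x‖
      = Real.exp (ξ * (h (φ x) + (1 / ξ) * Real.log ‖deriv φ x‖)) := by
    intro x hx
    rw [mul_add, Real.exp_add]
    congr 1
    rw [← mul_assoc, mul_one_div, div_self hξ.ne', one_mul,
      Real.exp_log (norm_pos_iff.mpr (hder x hx))]
  have hid2 : ∀ y ∈ U,
      Real.exp (ξ * (h (φ (ψ y)) + (1 / ξ) * Real.log ‖deriv φ (ψ y)‖)) * ‖deriv ψ y‖
        = Real.exp (ξ * h y) := by
    intro y hy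
    obtain ⟨hyV, hyφ⟩ := hψV y hy
    rw [hψder y hy, norm_inv, hyφ, mul_add, Real.exp_add, ← mul_assoc, mul_one_div,
      div_self hξ.ne', one_mul, Real.exp_log (norm_pos_iff.mpr (hder _ hyV)), mul_assoc,
      mul_inv_cancel₀ (norm_ne_zero_iff.mpr (hder _ hyV)), mul_one]
  unfold weightedDist
  congr 1
  ext L
  simp only [Set.mem_setOf_eq]
  constructor
  · rintro ⟨a, b, Q, hab, hQa, hQb, hQU, hQpc, rfl⟩
    refine ⟨a, b, ψ ∘ Q, hab, ?_, ?_, fun t ht => (hψV _ (hQU t ht)).1,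
      comp_piecewise hU hψdiff hQpc hQU, ?_⟩
    · show ψ (Q a) = z
      rw [hQa, hleft z hz]
    · show ψ (Q b) = w
      rw [hQb, hleft w hw]
    · exact (comp_length (g₁ := fun x => h (φ x) + (1 / ξ) * Real.log ‖deriv φ x‖)
        (g₂ := h) hU hψdiff (fun y hy => hid2 y hy) hab hQpc hQU).symm
  · rintro ⟨a, b, P, hab, hPa, hPb, hPV, hPpc, rfl⟩
    exact ⟨a, b, φ ∘ P, hab, by simp [hPa], by simp [hPb],
      fun t ht => hφbij.mapsTo (hPV t ht), comp_piecewise hV hφ hPpc hPV,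
      (comp_length (g₁ := h) (g₂ := fun x => h (φ x) + (1 / ξ) * Real.log ‖deriv φ x‖)
        hV hφ (fun x hx => hid1 x hx) hab hPpc hPV).symm⟩
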